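/- (Lemma 2, part (23).) Let M = diag(λ₁, …, λ_N) with λ₁ > λ₂ > ⋯ > λ_r > λ_{r+1} ≥ ⋯ ≥ λ_N ≥ 0, and let d_min = min_{1 ≤ s < j ≤ r+1} (λ_s − λ_j). Let X ∈ St(N,r) with ‖grad g(X)‖_F ≤ ε, and suppose that for each column x_j of X (j = 1, …, r) the eigenvalue of M closest to the Rayleigh quotient x_jᵀ M x_j is λ_j (i.e., |x_jᵀ M x_j − λ_j| = min_{1 ≤ n ≤ N} |x_jᵀ M x_j − λ_n|). Then there is a diagonal matrix S ∈ ℝ^{r×r} with diagonal entries ±1 such that ‖X − X_Ω S‖_F ≤ 12 ε / d_min, where X_Ω = [e₁, …, e_r] ∈ ℝ^{N×r} has as columns the first r standard basis vectors. -/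

import Mathlib

open Matrix

/-- The diagonal weight matrix `N_r = diag(r, r−1, …, 1)`. -/
noncomputable def Nr (r : ℕ) : Matrix (Fin r) (Fin r) ℝ :=
  Matrix.diagonal fun j => (r : ℝ) - (j : ℕ)

/-- The Frobenius norm. -/
noncomputable def frob {m n : ℕ} (A : Matrix (Fin m) (Fin n) ℝ) : ℝ :=
  Real.sqrt (∑ i, ∑ j, A i j ^ 2)

/-- `d_min = min_{1 ≤ s < j ≤ r+1} (λ_s − λ_j)` (0-based: `0 ≤ s < j ≤ r`). -/
noncomputable def dmin {N : ℕ} (lam : Fin N → ℝ) (r : ℕ) : ℝ :=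
  sInf {d : ℝ | ∃ s j : Fin N, (s : ℕ) < (j : ℕ) ∧ (j : ℕ) ≤ r ∧ d = lam s - lam j}

/-- The Riemannian gradient `grad g(X) = (X Xᵀ − I) M X N_r − (1/2) X [Xᵀ M X, N_r]`. -/
noncomputable def gradg {N r : ℕ} (M : Matrix (Fin N) (Fin N) ℝ)
    (X : Matrix (Fin N) (Fin r) ℝ) : Matrix (Fin N) (Fin r) ℝ :=
  (X * Xᵀ - 1) * M * X * Nr r
    - (1/2 : ℝ) • (X * (Xᵀ * M * X * Nr r - Nr r * (Xᵀ * M * X)))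

noncomputable def frobSq {m n : ℕ} (A : Matrix (Fin m) (Fin n) ℝ) : ℝ := ∑ i, ∑ j, A i j ^ 2
noncomputable def mip {m n : ℕ} (A B : Matrix (Fin m) (Fin n) ℝ) : ℝ := ∑ i, ∑ j, A i j * B i j

lemma frob_eq {m n : ℕ} (A : Matrix (Fin m) (Fin n) ℝ) : frob A = Real.sqrt (frobSq A) := rfl

lemma mip_eq_trace {m n : ℕ} (A B : Matrix (Fin m) (Fin n) ℝ) :
    mip A B = (Aᵀ * B).trace := by
  simp [mip, Matrix.trace, Matrix.mul_apply, Matrix.diag]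
  rw [Finset.sum_comm]

lemma frobSq_nonneg {m n : ℕ} (A : Matrix (Fin m) (Fin n) ℝ) : 0 ≤ frobSq A :=
  Finset.sum_nonneg fun _ _ => Finset.sum_nonneg fun _ _ => sq_nonneg _

lemma frobSq_mono {m n : ℕ} (A B : Matrix (Fin m) (Fin n) ℝ)
    (h : ∀ i j, A i j ^ 2 ≤ B i j ^ 2) : frobSq A ≤ frobSq B :=
  Finset.sum_le_sum fun i _ => Finset.sum_le_sum fun j _ => h i j

lemma frobSq_add {m n : ℕ} (A B : Matrix (Fin m) (Fin n) ℝ) :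
    frobSq (A + B) = frobSq A + 2 * mip A B + frobSq B := by
  simp only [frobSq, mip, Matrix.add_apply, add_sq, Finset.sum_add_distrib, Finset.mul_sum]
  ring_nf

lemma frobSq_neg {m n : ℕ} (A : Matrix (Fin m) (Fin n) ℝ) : frobSq (-A) = frobSq A := by
  simp [frobSq]

lemma frobSq_smul {m n : ℕ} (c : ℝ) (A : Matrix (Fin m) (Fin n) ℝ) :
    frobSq (c • A) = c ^ 2 * frobSq A := by
  simp [frobSq, mul_pow, Finset.mul_sum]

lemma mip_X_right {N r s : ℕ} (X : Matrix (Fin N) (Fin r) ℝ)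
    (A : Matrix (Fin N) (Fin s) ℝ) (C : Matrix (Fin r) (Fin s) ℝ)
    (h : Xᵀ * A = 0) : mip A (X * C) = 0 := by
  rw [mip_eq_trace, ← Matrix.mul_assoc]
  have : Aᵀ * X = 0 := by
    have := congrArg Matrix.transpose h
    simpa using this
  simp [this]

lemma frobSq_X_mul {N r s : ℕ} (X : Matrix (Fin N) (Fin r) ℝ) (hX : Xᵀ * X = 1)
    (C : Matrix (Fin r) (Fin s) ℝ) : frobSq (X * C) = frobSq C := by
  have h1 : frobSq (X * C) = mip (X * C) (X * C) := by
    simp [frobSq, mip, sq]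
  have h2 : frobSq C = mip C C := by simp [frobSq, mip, sq]
  rw [h1, h2, mip_eq_trace, mip_eq_trace, Matrix.transpose_mul, Matrix.mul_assoc,
    ← Matrix.mul_assoc Xᵀ X C, hX, Matrix.one_mul]

lemma one_le_cast_sub_sq {a b : ℕ} (h : a ≠ b) : (1 : ℝ) ≤ ((a : ℝ) - (b : ℝ)) ^ 2 := by
  rcases lt_or_gt_of_ne h with h | h
  · have : (a : ℝ) + 1 ≤ (b : ℝ) := by exact_mod_cast h
    nlinarith
  · have : (b : ℝ) + 1 ≤ (a : ℝ) := by exact_mod_cast h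
    nlinarith

lemma sq_le_sq_mul {x c : ℝ} (h : 1 ≤ c ^ 2) : x ^ 2 ≤ x ^ 2 * c ^ 2 := by
  nlinarith [sq_nonneg x]

set_option maxHeartbeats 1600000 in
/-- Lemma 2, part (23): let `M = diag(λ₁,…,λ_N)` with
`λ₁ > ⋯ > λ_r > λ_{r+1} ≥ ⋯ ≥ λ_N ≥ 0`, and let `X ∈ St(N,r)` with
`‖grad g(X)‖_F ≤ ε` be such that for each column `x_j` the eigenvalue of `M`
closest to `x_jᵀ M x_j` is `λ_j`. Then there is a sign matrix `S = diag(±1)`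
with `‖X − X_Ω S‖_F ≤ 12 ε / d_min`, where `X_Ω = [e₁,…,e_r]`. -/
theorem stmt_13 {N r : ℕ} (hr : 1 ≤ r) (hrN : r < N)
    (lam : Fin N → ℝ)
    (hstrict : ∀ s j : Fin N, (s : ℕ) < (j : ℕ) → (j : ℕ) ≤ r → lam j < lam s)
    (hmono : ∀ s j : Fin N, r ≤ (s : ℕ) → s ≤ j → lam j ≤ lam s)
    (hnonneg : 0 ≤ lam ⟨N - 1, by omega⟩)
    (X : Matrix (Fin N) (Fin r) ℝ) (hX : Xᵀ * X = 1) (ε : ℝ)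
    (hgrad : frob (gradg (Matrix.diagonal lam) X) ≤ ε)
    (hclosest : ∀ (j : Fin r) (n : Fin N),
      |(fun i => X i j) ⬝ᵥ (Matrix.diagonal lam *ᵥ fun i => X i j) - lam (Fin.castLE hrN.le j)| ≤
        |(fun i => X i j) ⬝ᵥ (Matrix.diagonal lam *ᵥ fun i => X i j) - lam n|) :
    ∃ S : Fin r → ℝ, (∀ j, S j = 1 ∨ S j = -1) ∧
      frob (X - Matrix.of fun (i : Fin N) (j : Fin r) =>
        if (i : ℕ) = (j : ℕ) then S j else 0) ≤ 12 * ε / dmin lam r := by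
  classical
  set M := Matrix.diagonal lam with hM
  set A := Xᵀ * M * X with hA
  set Q' := A * Nr r - Nr r * A with hQ'
  set R := M * X - X * A with hR
  set D := Matrix.diagonal (fun j => A j j) with hD
  set E := M * X - X * D with hE
  set d := dmin lam r with hd
  -- dmin facts
  set Sd : Set ℝ := {x : ℝ | ∃ s j : Fin N, (s : ℕ) < (j : ℕ) ∧ (j : ℕ) ≤ r ∧ x = lam s - lam j}
    with hSd
  have hSne : Sd.Nonempty := by
    refine ⟨lam ⟨0, by omega⟩ - lam ⟨r, by omega⟩, ⟨0, by omega⟩, ⟨r, by omega⟩, ?_, ?_, rfl⟩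
    · exact hr
    · simp
  have hSfin : Sd.Finite := by
    apply Set.Finite.subset (Set.finite_range (fun p : Fin N × Fin N => lam p.1 - lam p.2))
    rintro x ⟨s, j, _, _, rfl⟩
    exact ⟨(s, j), rfl⟩
  have hd_mem : d ∈ Sd := hSne.csInf_mem hSfin
  have hd_pos : 0 < d := by
    obtain ⟨s, j, h1, h2, h3⟩ := hd_mem
    rw [h3]
    exact sub_pos.2 (hstrict s j h1 h2)
  have hd_le : ∀ s j : Fin N, (s : ℕ) < (j : ℕ) → (j : ℕ) ≤ r → d ≤ lam s - lam j :=
    fun s j h1 h2 => csInf_le hSfin.bddBelow ⟨s, j, h1, h2, rfl⟩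
  have hε0 : 0 ≤ ε := le_trans (Real.sqrt_nonneg _) hgrad
  -- gradient decomposition
  have hXR : Xᵀ * R = 0 := by
    rw [hR, Matrix.mul_sub, ← Matrix.mul_assoc, ← Matrix.mul_assoc, hX, Matrix.one_mul,
      ← hA, sub_self]
  have hG : gradg M X = -(R * Nr r) + X * ((-(1/2 : ℝ)) • Q') := by
    have h1 : (X * Xᵀ - 1) * M * X = -R := by
      rw [Matrix.sub_mul, Matrix.sub_mul, Matrix.one_mul, hR, neg_sub,
        Matrix.mul_assoc X Xᵀ M, Matrix.mul_assoc X (Xᵀ * M) X, ← hA]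
    unfold gradg
    rw [h1, ← hA, ← hQ', Matrix.neg_mul, Matrix.mul_smul, neg_smul, ← sub_eq_add_neg]
  have hgradSq : frobSq (gradg M X) = frobSq (R * Nr r) + (1/4) * frobSq Q' := by
    rw [hG, frobSq_add]
    have h0 : mip (-(R * Nr r)) (X * ((-(1/2 : ℝ)) • Q')) = 0 := by
      apply mip_X_right
      rw [Matrix.mul_neg, ← Matrix.mul_assoc, hXR]
      simp
    rw [h0, frobSq_neg, frobSq_X_mul X hX, frobSq_smul]
    ring
  have hGε : frobSq (gradg M X) ≤ ε ^ 2 := by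
    have h1 : frob (gradg M X) ^ 2 ≤ ε ^ 2 := by
      apply pow_le_pow_left₀ (Real.sqrt_nonneg _) hgrad
    rwa [frob_eq, Real.sq_sqrt (frobSq_nonneg _)] at h1
  have hPε : frobSq (R * Nr r) ≤ ε ^ 2 := by
    have := frobSq_nonneg Q'
    linarith [hgradSq ▸ hGε]
  have hQε : frobSq Q' ≤ 4 * ε ^ 2 := by
    have := frobSq_nonneg (R * Nr r)
    linarith [hgradSq ▸ hGε]
  have hRε : frobSq R ≤ ε ^ 2 := by
    refine le_trans (frobSq_mono R (R * Nr r) fun i j => ?_) hPε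
    have hj : (1 : ℝ) ≤ (r : ℝ) - (j : ℕ) := by
      have := j.2
      have : ((j : ℕ) : ℝ) + 1 ≤ (r : ℝ) := by exact_mod_cast this
      linarith
    have : (R * Nr r) i j = R i j * ((r : ℝ) - (j : ℕ)) := by
      simp [Nr, Matrix.mul_diagonal]
    have hc2 : 1 ≤ ((r : ℝ) - (j : ℕ)) ^ 2 := by nlinarith
    rw [this, mul_pow]
    exact sq_le_sq_mul hc2
  have hADε : frobSq (A - D) ≤ 4 * ε ^ 2 := by
    refine le_trans (frobSq_mono (A - D) Q' fun k j => ?_) hQε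
    have hQ'kj : Q' k j = A k j * (((k : ℕ) : ℝ) - ((j : ℕ) : ℝ)) := by
      rw [hQ']
      simp [Nr, Matrix.mul_diagonal, Matrix.diagonal_mul, Matrix.sub_apply]
      ring
    by_cases hkj : k = j
    · subst hkj
      simp [hD, Matrix.sub_apply, Matrix.diagonal_apply_eq]
      positivity
    · have h1 : (1 : ℝ) ≤ (((k : ℕ) : ℝ) - ((j : ℕ) : ℝ)) ^ 2 :=
        one_le_cast_sub_sq (fun h => hkj (Fin.ext h))
      have hADkj : (A - D) k j = A k j := by
        simp [hD, Matrix.sub_apply, Matrix.diagonal_apply_ne _ hkj]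
      rw [hADkj, hQ'kj, mul_pow]
      exact sq_le_sq_mul h1
  have hEdecomp : E = R + X * (A - D) := by
    rw [hE, hR, Matrix.mul_sub, sub_add_sub_cancel]
  have hEε : frobSq E ≤ 5 * ε ^ 2 := by
    rw [hEdecomp, frobSq_add, mip_X_right X R (A - D) hXR, frobSq_X_mul X hX]
    linarith
  have hEentry : ∀ (i : Fin N) (j : Fin r), E i j = (lam i - A j j) * X i j := by
    intro i j
    rw [hE]
    simp [hM, Matrix.sub_apply, Matrix.diagonal_mul, Matrix.mul_diagonal, hD]
    ring
  -- column facts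
  have hcol1 : ∀ j : Fin r, ∑ i, X i j ^ 2 = 1 := by
    intro j
    have h := congrFun (congrFun hX j) j
    simp only [Matrix.mul_apply, Matrix.transpose_apply, Matrix.one_apply_eq] at h
    rw [← h]
    exact Finset.sum_congr rfl fun i _ => (sq (X i j)).symm ▸ rfl
  have hrho : ∀ j : Fin r, ((fun i => X i j) ⬝ᵥ (M *ᵥ fun i => X i j)) = A j j := by
    intro j
    have hL : ((fun i => X i j) ⬝ᵥ (M *ᵥ fun i => X i j)) = ∑ i, lam i * X i j ^ 2 := by
      rw [hM]
      simp only [dotProduct, Matrix.mulVec_diagonal]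
      exact Finset.sum_congr rfl fun i _ => by ring
    have hAjj : A j j = ∑ i, lam i * X i j ^ 2 := by
      rw [hA, hM, Matrix.mul_apply]
      refine Finset.sum_congr rfl fun i _ => ?_
      rw [Matrix.mul_diagonal, Matrix.transpose_apply]
      ring
    rw [hL, hAjj]
  have hgap : ∀ (j : Fin r) (i : Fin N), i ≠ Fin.castLE hrN.le j →
      d ^ 2 / 4 ≤ (lam i - A j j) ^ 2 := by
    intro j i hij
    set j' := Fin.castLE hrN.le j with hj'
    have hjr : (j' : ℕ) < r := j.2
    have h1 : d ≤ |lam i - lam j'| := by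
      rcases le_or_gt ((i : ℕ)) r with hi | hi
      · rcases lt_trichotomy ((i : ℕ)) ((j' : ℕ)) with h | h | h
        · exact le_trans (hd_le i j' h hjr.le) (le_abs_self _)
        · exact absurd (Fin.ext h) hij
        · calc d ≤ lam j' - lam i := hd_le j' i h hi
            _ ≤ |lam i - lam j'| := by
              rw [abs_sub_comm]; exact le_abs_self _
      · have ht : d ≤ lam j' - lam ⟨r, by omega⟩ := hd_le j' ⟨r, by omega⟩ (by simpa using hjr)
          (by simp)
        have hmono' : lam i ≤ lam ⟨r, by omega⟩ := hmono ⟨r, by omega⟩ i (by simp)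
          (by rw [Fin.le_def]; simpa using hi.le)
        calc d ≤ lam j' - lam i := by linarith
          _ ≤ |lam i - lam j'| := by rw [abs_sub_comm]; exact le_abs_self _
    have h2 : |A j j - lam j'| ≤ |A j j - lam i| := by
      have h := hclosest j i
      rwa [hrho j] at h
    have h3 : |lam i - lam j'| ≤ |lam i - A j j| + |A j j - lam j'| := abs_sub_le _ _ _
    have h4 : |A j j - lam i| = |lam i - A j j| := abs_sub_comm _ _
    have h5 : d / 2 ≤ |lam i - A j j| := by rw [h4] at h2; linarith
    have h6 : (d / 2) ^ 2 ≤ |lam i - A j j| ^ 2 := pow_le_pow_left₀ (by linarith) h5 2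
    rw [sq_abs] at h6
    calc d ^ 2 / 4 = (d / 2) ^ 2 := by ring
      _ ≤ _ := h6
  have hd2 : (0 : ℝ) < d ^ 2 := by positivity
  have hcolsum : ∀ j : Fin r,
      ∑ i ∈ Finset.univ.erase (Fin.castLE hrN.le j), X i j ^ 2
        ≤ (4 / d ^ 2) * ∑ i, E i j ^ 2 := by
    intro j
    have hstep : (d ^ 2 / 4) * ∑ i ∈ Finset.univ.erase (Fin.castLE hrN.le j), X i j ^ 2
        ≤ ∑ i, E i j ^ 2 := by
      rw [Finset.mul_sum]
      calc ∑ i ∈ Finset.univ.erase (Fin.castLE hrN.le j), d ^ 2 / 4 * X i j ^ 2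
          ≤ ∑ i ∈ Finset.univ.erase (Fin.castLE hrN.le j), E i j ^ 2 := by
            refine Finset.sum_le_sum fun i hi => ?_
            rw [hEentry i j, mul_pow]
            exact mul_le_mul_of_nonneg_right (hgap j i (Finset.ne_of_mem_erase hi))
              (sq_nonneg _)
        _ ≤ ∑ i, E i j ^ 2 := Finset.sum_le_sum_of_subset_of_nonneg
            (Finset.erase_subset _ _) (fun i _ _ => sq_nonneg _)
    calc ∑ i ∈ Finset.univ.erase (Fin.castLE hrN.le j), X i j ^ 2
        = (4 / d ^ 2) * ((d ^ 2 / 4) *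
            ∑ i ∈ Finset.univ.erase (Fin.castLE hrN.le j), X i j ^ 2) := by
          rw [← mul_assoc]
          have h44 : (4 / d ^ 2) * (d ^ 2 / 4) = 1 := by field_simp
          rw [h44, one_mul]
      _ ≤ (4 / d ^ 2) * ∑ i, E i j ^ 2 :=
          mul_le_mul_of_nonneg_left hstep (by positivity)
  set Sv : Fin r → ℝ := fun j => if 0 ≤ X (Fin.castLE hrN.le j) j then 1 else -1 with hSv
  refine ⟨Sv, fun j => by by_cases h : 0 ≤ X (Fin.castLE hrN.le j) j <;> simp [hSv, h], ?_⟩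
  have hcoldiff : ∀ j : Fin r,
      ∑ i, (X i j - (if (i : ℕ) = (j : ℕ) then Sv j else 0)) ^ 2
        ≤ (8 / d ^ 2) * ∑ i, E i j ^ 2 := by
    intro j
    set j' := Fin.castLE hrN.le j with hj'
    set c := X j' j with hc
    have hsplit : ∑ i, (X i j - (if (i : ℕ) = (j : ℕ) then Sv j else 0)) ^ 2
        = (c - Sv j) ^ 2 + ∑ i ∈ Finset.univ.erase j',
            (X i j - (if (i : ℕ) = (j : ℕ) then Sv j else 0)) ^ 2 := by
      rw [← Finset.add_sum_erase _ _ (Finset.mem_univ j')]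
      congr 1
      rw [if_pos (show ((Fin.castLE hrN.le j : Fin N) : ℕ) = (j : ℕ) from rfl)]
    have herase : ∀ i ∈ Finset.univ.erase j',
        (X i j - (if (i : ℕ) = (j : ℕ) then Sv j else 0)) ^ 2 = X i j ^ 2 := by
      intro i hi
      have hne : i ≠ j' := Finset.ne_of_mem_erase hi
      have : ¬ ((i : ℕ) = (j : ℕ)) := fun h => hne (Fin.ext h)
      rw [if_neg this, sub_zero]
    have h1 : ∑ i ∈ Finset.univ.erase j', X i j ^ 2 = 1 - c ^ 2 := by
      have h := hcol1 j
      rw [← Finset.add_sum_erase _ _ (Finset.mem_univ j'), ← hc] at h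
      linarith
    have hc2 : c ^ 2 ≤ 1 := by
      have h := hcol1 j
      have h2 : X j' j ^ 2 ≤ ∑ i, X i j ^ 2 :=
        Finset.single_le_sum (f := fun i => X i j ^ 2) (fun i _ => sq_nonneg _)
          (Finset.mem_univ j')
      rw [← hc] at h2
      linarith
    have habs : |c| ≤ 1 := by
      have h : |c| ^ 2 ≤ 1 := by rwa [sq_abs]
      nlinarith [abs_nonneg c]
    have hsc : (c - Sv j) ^ 2 = c ^ 2 + 1 - 2 * |c| := by
      have hSvj : Sv j = if 0 ≤ c then 1 else -1 := rfl
      rw [hSvj]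
      by_cases h : 0 ≤ c
      · rw [if_pos h, abs_of_nonneg h]; ring
      · rw [if_neg h, abs_of_neg (lt_of_not_ge h)]; ring
    have hsum : ∑ i, (X i j - (if (i : ℕ) = (j : ℕ) then Sv j else 0)) ^ 2
        = 2 - 2 * |c| := by
      rw [hsplit, Finset.sum_congr rfl herase, h1, hsc]
      ring
    have habs2 : c ^ 2 ≤ |c| := by
      have : |c| * |c| ≤ 1 * |c| := mul_le_mul_of_nonneg_right habs (abs_nonneg c)
      calc c ^ 2 = |c| * |c| := by rw [← sq_abs]; ring
        _ ≤ 1 * |c| := this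
        _ = |c| := one_mul _
    calc ∑ i, (X i j - (if (i : ℕ) = (j : ℕ) then Sv j else 0)) ^ 2
        = 2 - 2 * |c| := hsum
      _ ≤ 2 * (1 - c ^ 2) := by linarith
      _ = 2 * ∑ i ∈ Finset.univ.erase j', X i j ^ 2 := by rw [h1]
      _ ≤ 2 * ((4 / d ^ 2) * ∑ i, E i j ^ 2) :=
          mul_le_mul_of_nonneg_left (hcolsum j) (by norm_num)
      _ = (8 / d ^ 2) * ∑ i, E i j ^ 2 := by ring
  have htot : frobSq (X - Matrix.of fun (i : Fin N) (j : Fin r) =>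
      if (i : ℕ) = (j : ℕ) then Sv j else 0) ≤ (8 / d ^ 2) * frobSq E := by
    have hL : frobSq (X - Matrix.of fun (i : Fin N) (j : Fin r) =>
        if (i : ℕ) = (j : ℕ) then Sv j else 0)
        = ∑ j, ∑ i, (X i j - (if (i : ℕ) = (j : ℕ) then Sv j else 0)) ^ 2 := by
      unfold frobSq
      rw [Finset.sum_comm]
      refine Finset.sum_congr rfl fun j _ => Finset.sum_congr rfl fun i _ => ?_
      rw [Matrix.sub_apply, Matrix.of_apply]
    have hR' : (8 / d ^ 2) * frobSq E = ∑ j, (8 / d ^ 2) * ∑ i, E i j ^ 2 := by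
      unfold frobSq
      rw [Finset.sum_comm, Finset.mul_sum]
    rw [hL, hR']
    exact Finset.sum_le_sum fun j _ => hcoldiff j
  have hfin : frobSq (X - Matrix.of fun (i : Fin N) (j : Fin r) =>
      if (i : ℕ) = (j : ℕ) then Sv j else 0) ≤ (12 * ε / d) ^ 2 := by
    have h1 : (8 / d ^ 2) * frobSq E ≤ (8 / d ^ 2) * (5 * ε ^ 2) :=
      mul_le_mul_of_nonneg_left hEε (by positivity)
    have h2 : (8 / d ^ 2) * (5 * ε ^ 2) ≤ (12 * ε / d) ^ 2 := by
      rw [div_mul_eq_mul_div, div_pow, mul_pow, div_le_div_iff₀ hd2 hd2]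
      nlinarith [sq_nonneg ε, sq_nonneg d, mul_nonneg (sq_nonneg ε) (sq_nonneg d)]
    linarith
  rw [frob_eq]
  have hnn : 0 ≤ 12 * ε / d := div_nonneg (by linarith) hd_pos.le
  have hsl := Real.sqrt_le_sqrt hfin
  rwa [Real.sqrt_sq hnn] at hsl
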